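/- Let K(z) = z/(1+z)² be the Koebe function. Let p ≥ 0 and q ∈ ℝ with 3p − 2q − 1 > 0. Then there exist constants c > 0 and C > 0 such that for every r ∈ [1/2, 1), c (1 − r)^{−(3p − 2q − 1)} ≤ ∫₀^{2π} |K′(r e^{iθ})|^p / |K(r e^{iθ})|^q dθ ≤ C (1 − r)^{−(3p − 2q − 1)}. In particular, the Koebe function saturates the universal bound: its generalized integral means spectrum equals 3p − 2q − 1. -/

import Mathlib

open MeasureTheory
open Real

noncomputable def kz (r θ : ℝ) : ℂ := (r:ℂ) * Complex.exp ((θ:ℂ) * Complex.I)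

lemma kz_eq (r θ : ℝ) : kz r θ = Complex.mk (r * Real.cos θ) (r * Real.sin θ) := by
  rw [kz, Complex.exp_mul_I, ← Complex.ofReal_cos, ← Complex.ofReal_sin]
  apply Complex.ext <;> simp [Complex.cos_ofReal_re, Complex.sin_ofReal_re]

lemma kz_re (r θ : ℝ) : (kz r θ).re = r * Real.cos θ := by rw [kz_eq]
lemma kz_im (r θ : ℝ) : (kz r θ).im = r * Real.sin θ := by rw [kz_eq]

lemma abs_kz (r θ : ℝ) (hr : 0 ≤ r) : ‖kz r θ‖ = r := by
  simp [kz, Complex.norm_exp, abs_of_nonneg hr]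

lemma sq_abs_one_add_kz (r θ : ℝ) :
    ‖1 + kz r θ‖ ^ 2 = (1 - r)^2 + 2*r*(1 + Real.cos θ) := by
  rw [Complex.sq_norm, Complex.normSq_apply]
  simp only [Complex.add_re, Complex.add_im, Complex.one_re, Complex.one_im, kz_re, kz_im]
  have h2 : (r*Real.sin θ)^2 + (r*Real.cos θ)^2 = r^2 := by
    rw [mul_pow, mul_pow, ← mul_add, add_comm ((Real.sin θ)^2), Real.cos_sq_add_sin_sq, mul_one]
  nlinarith [h2]

lemma abs_one_add_kz_ge (r θ : ℝ) (hr : 0 ≤ r) : 1 - r ≤ ‖1 + kz r θ‖ := by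
  have h := norm_add_le (1 + kz r θ) (-(kz r θ))
  simp only [add_neg_cancel_right, norm_neg] at h
  rw [abs_kz r θ hr] at h
  simp at h ⊢; linarith

lemma abs_one_sub_kz_le (r θ : ℝ) (hr : 0 ≤ r) (hr1 : r ≤ 1) :
    ‖1 - kz r θ‖ ≤ 2 := by
  have h := norm_add_le 1 (-(kz r θ))
  simp only [norm_neg] at h
  rw [abs_kz r θ hr] at h
  rw [sub_eq_add_neg]
  simp at h ⊢; linarith

lemma one_add_kz_ne (r θ : ℝ) (hr : 0 ≤ r) (hr1 : r < 1) : 1 + kz r θ ≠ 0 := by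
  intro h
  have := abs_one_add_kz_ge r θ hr
  rw [h] at this; simp at this; linarith

lemma deriv_koebe (z : ℂ) (hz : 1 + z ≠ 0) :
    deriv (fun w : ℂ => w / (1 + w) ^ 2) z = (1 - z) / (1 + z) ^ 3 := by
  have h1 : HasDerivAt (fun w : ℂ => (1 + w) ^ 2) (2 * (1 + z)) z := by
    have := ((hasDerivAt_id z).const_add 1).fun_pow 2
    simpa using this
  have h2 : HasDerivAt (fun w : ℂ => w / (1 + w) ^ 2)
      ((1 * (1 + z) ^ 2 - z * (2 * (1 + z))) / ((1 + z) ^ 2) ^ 2) z :=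
    (hasDerivAt_id z).div h1 (pow_ne_zero 2 hz)
  rw [h2.deriv]
  field_simp
  ring

lemma abs_one_sub_kz_pos (r θ : ℝ) (hr : 0 ≤ r) (hr1 : r < 1) :
    0 < ‖1 - kz r θ‖ := by
  rw [norm_pos_iff, sub_ne_zero]
  intro h
  have := abs_kz r θ hr
  rw [← h] at this; simp at this; linarith

lemma abs_one_add_kz_pos (r θ : ℝ) (hr : 0 ≤ r) (hr1 : r < 1) :
    0 < ‖1 + kz r θ‖ :=
  lt_of_lt_of_le (by linarith) (abs_one_add_kz_ge r θ hr)

lemma integrand_eq (p q r θ : ℝ) (hr0 : 0 < r) (hr1 : r < 1) :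
    ‖deriv (fun z : ℂ => z / (1 + z) ^ 2) (kz r θ)‖ ^ p /
      ‖kz r θ / (1 + kz r θ) ^ 2‖ ^ q
    = r ^ (-q) * ‖1 - kz r θ‖ ^ p *
        ‖1 + kz r θ‖ ^ (-(3 * p - 2 * q)) := by
  rw [show -(3 * p - 2 * q) = 2 * q - 3 * p by ring]
  have hA := abs_one_sub_kz_pos r θ hr0.le hr1
  have hB := abs_one_add_kz_pos r θ hr0.le hr1
  set A := ‖1 - kz r θ‖
  set B := ‖1 + kz r θ‖
  rw [deriv_koebe _ (one_add_kz_ne r θ hr0.le hr1), norm_div, norm_div, norm_pow, norm_pow,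
    abs_kz r θ hr0.le]
  rw [Real.div_rpow hA.le (by positivity), Real.div_rpow hr0.le (by positivity)]
  rw [← Real.rpow_natCast B 3, ← Real.rpow_natCast B 2, ← Real.rpow_mul hB.le,
    ← Real.rpow_mul hB.le]
  rw [Real.rpow_sub hB, Real.rpow_neg hr0.le]
  have e2 : ((3:ℕ):ℝ) * p = 3 * p := by norm_num
  have e3 : ((2:ℕ):ℝ) * q = 2 * q := by norm_num
  rw [e2, e3]
  have p1 : (0:ℝ) < B ^ (3*p) := Real.rpow_pos_of_pos hB _
  have p2 : (0:ℝ) < B ^ (2*q) := Real.rpow_pos_of_pos hB _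
  have p3 : (0:ℝ) < r ^ q := Real.rpow_pos_of_pos hr0 _
  field_simp

lemma cos_eq_neg_cos_sub_pi (θ : ℝ) : Real.cos θ = -Real.cos (θ - π) := by
  have h := Real.cos_add_pi (θ - π)
  rw [sub_add_cancel] at h
  linarith

lemma abs_one_add_kz_ge_dist (r θ : ℝ) (hr : 1/2 ≤ r) (hθ : |θ - π| ≤ π) :
    |θ - π| / 3 ≤ ‖1 + kz r θ‖ := by
  have hB : 0 ≤ ‖1 + kz r θ‖ := norm_nonneg _
  have h1 := sq_abs_one_add_kz r θ
  have h2 := Real.cos_le_one_sub_mul_cos_sq hθ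
  have h3 := cos_eq_neg_cos_sub_pi θ
  have hπ : π ^ 2 < 10 := by nlinarith [pi_lt_d2, pi_pos]
  have hπ0 : (0:ℝ) < π ^ 2 := by positivity
  have h2' : 2 * (θ - π)^2 ≤ π ^ 2 * (1 - Real.cos (θ - π)) := by
    have hd : 2 / π ^ 2 * (θ - π)^2 ≤ 1 - Real.cos (θ - π) := by linarith
    calc 2 * (θ - π)^2 = (2 / π ^ 2 * (θ - π)^2) * π ^ 2 := by field_simp
      _ ≤ (1 - Real.cos (θ - π)) * π ^ 2 := mul_le_mul_of_nonneg_right hd hπ0.le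
      _ = π ^ 2 * (1 - Real.cos (θ - π)) := by ring
  have hB2 : (θ - π)^2 / 5 ≤ ‖1 + kz r θ‖ ^ 2 := by
    nlinarith [sq_nonneg (1 - r), h2', hπ, Real.cos_le_one (θ - π), h3, h1]
  nlinarith [sq_abs (θ - π), abs_nonneg (θ - π)]

lemma sq_abs_one_add_kz_le (r θ : ℝ) (hr0 : 0 ≤ r) (hr1 : r ≤ 1) (h : |θ - π| ≤ 1 - r) :
    ‖1 + kz r θ‖ ^ 2 ≤ 2 * (1 - r)^2 := by
  have h1 := sq_abs_one_add_kz r θ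
  have h3 := cos_eq_neg_cos_sub_pi θ
  have h4 : 1 - (θ - π)^2 / 2 ≤ Real.cos (θ - π) := Real.one_sub_sq_div_two_le_cos
  have h5 : (θ - π)^2 ≤ (1 - r)^2 := by
    have := abs_le.mp h
    nlinarith [this.1, this.2]
  nlinarith [sq_nonneg (θ - π)]

lemma abs_one_sub_kz_ge_one (r θ : ℝ) (hr0 : 0 ≤ r) (h1 : π/2 ≤ θ) (h2 : θ ≤ π + π/2) :
    1 ≤ ‖1 - kz r θ‖ := by
  have hc := Real.cos_nonpos_of_pi_div_two_le_of_le h1 h2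
  have hre : (1 - kz r θ).re = 1 - r * Real.cos θ := by
    simp [Complex.sub_re, kz_re]
  have hle := Complex.re_le_norm (1 - kz r θ)
  rw [hre] at hle
  nlinarith [mul_nonneg hr0 (neg_nonneg.mpr hc)]

lemma int_sub_rpow (s b x y : ℝ) (hs : 1 < s) (hy : y < b) (hxy : x ≤ y) :
    ∫ θ in x..y, (b - θ) ^ (-s) = ((b - y) ^ (1 - s) - (b - x) ^ (1 - s)) / (s - 1) := by
  have hs1 : s - 1 ≠ 0 := by linarith
  have key : ∀ θ ∈ Set.uIcc x y,
      HasDerivAt (fun t : ℝ => (b - t) ^ (1 - s) / (s - 1)) ((b - θ) ^ (-s)) θ := by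
    intro θ hθ
    rw [Set.uIcc_of_le hxy] at hθ
    have hbθ : 0 < b - θ := by linarith [hθ.2]
    have h1 : HasDerivAt (fun t : ℝ => b - t) (-1) θ := (hasDerivAt_id θ).const_sub b
    have h2 := (h1.rpow_const (p := 1 - s) (Or.inl (ne_of_gt hbθ))).div_const (s - 1)
    refine h2.congr_deriv ?_
    rw [show (1 : ℝ) - s - 1 = -s by ring]
    field_simp
    ring
  have hcont : ContinuousOn (fun θ : ℝ => (b - θ) ^ (-s)) (Set.uIcc x y) := by
    apply ContinuousOn.rpow_const (continuousOn_const.sub continuousOn_id)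
    intro θ hθ
    rw [Set.uIcc_of_le hxy] at hθ
    simp only [Pi.sub_apply, id_eq]
    exact Or.inl (ne_of_gt (by linarith [hθ.2]))
  rw [intervalIntegral.integral_eq_sub_of_hasDerivAt key (hcont.intervalIntegrable)]
  ring

lemma int_rpow_sub (s b x y : ℝ) (hs : 1 < s) (hx : b < x) (hxy : x ≤ y) :
    ∫ θ in x..y, (θ - b) ^ (-s) = ((x - b) ^ (1 - s) - (y - b) ^ (1 - s)) / (s - 1) := by
  have hs1 : s - 1 ≠ 0 := by linarith
  have key : ∀ θ ∈ Set.uIcc x y,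
      HasDerivAt (fun t : ℝ => -((t - b) ^ (1 - s) / (s - 1))) ((θ - b) ^ (-s)) θ := by
    intro θ hθ
    rw [Set.uIcc_of_le hxy] at hθ
    have hbθ : 0 < θ - b := by linarith [hθ.1]
    have h1 : HasDerivAt (fun t : ℝ => t - b) 1 θ := (hasDerivAt_id θ).sub_const b
    have h2 := (((h1.rpow_const (p := 1 - s) (Or.inl (ne_of_gt hbθ)))).div_const (s - 1)).neg
    refine h2.congr_deriv ?_
    rw [show (1 : ℝ) - s - 1 = -s by ring]
    field_simp
    ring
  have hcont : ContinuousOn (fun θ : ℝ => (θ - b) ^ (-s)) (Set.uIcc x y) := by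
    apply ContinuousOn.rpow_const (continuousOn_id.sub continuousOn_const)
    intro θ hθ
    rw [Set.uIcc_of_le hxy] at hθ
    simp only [Pi.sub_apply, id_eq]
    exact Or.inl (ne_of_gt (by linarith [hθ.1]))
  rw [intervalIntegral.integral_eq_sub_of_hasDerivAt key (hcont.intervalIntegrable)]
  ring

set_option maxHeartbeats 1000000 in
/-- The Koebe function `K(z) = z/(1+z)²` saturates the universal bound: for `p ≥ 0`
and `3p - 2q - 1 > 0`, its generalized integral means are comparable to
`(1-r)^{-(3p-2q-1)}`, so its generalized integral means spectrum equals `3p - 2q - 1`. -/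
theorem koebe_saturates_universal_bound
    (p q : ℝ) (hp : 0 ≤ p) (hpq : 0 < 3 * p - 2 * q - 1) :
    ∃ c > 0, ∃ C > 0, ∀ r : ℝ, r ∈ Set.Ico (1/2 : ℝ) 1 →
      c * (1 - r) ^ (-(3 * p - 2 * q - 1)) ≤
        (∫ θ in (0:ℝ)..(2 * Real.pi),
          ‖deriv (fun z : ℂ => z / (1 + z) ^ 2)
              ((r : ℂ) * Complex.exp ((θ : ℂ) * Complex.I))‖ ^ p /
          ‖((r : ℂ) * Complex.exp ((θ : ℂ) * Complex.I)) /
              (1 + (r : ℂ) * Complex.exp ((θ : ℂ) * Complex.I)) ^ 2‖ ^ q) ∧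
      (∫ θ in (0:ℝ)..(2 * Real.pi),
          ‖deriv (fun z : ℂ => z / (1 + z) ^ 2)
              ((r : ℂ) * Complex.exp ((θ : ℂ) * Complex.I))‖ ^ p /
          ‖((r : ℂ) * Complex.exp ((θ : ℂ) * Complex.I)) /
              (1 + (r : ℂ) * Complex.exp ((θ : ℂ) * Complex.I)) ^ 2‖ ^ q)
        ≤ C * (1 - r) ^ (-(3 * p - 2 * q - 1)) := by
  have hπ3 := Real.pi_gt_three
  have hs1 : (1:ℝ) < 3 * p - 2 * q := by linarith
  have hCpos : (0:ℝ) < 2^|q| * 2^p * (2 + 2*(3:ℝ)^(3*p-2*q)/(3*p-2*q-1)) := by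
    have h1 : (0:ℝ) < 2*(3:ℝ)^(3*p-2*q)/(3*p-2*q-1) := by
      apply div_pos (by positivity) hpq
    positivity
  refine ⟨2^(-|q|) * (2:ℝ)^(-(3*p-2*q)/2), by positivity,
    2^|q| * 2^p * (2 + 2*(3:ℝ)^(3*p-2*q)/(3*p-2*q-1)), hCpos, ?_⟩
  rintro r ⟨hr1, hr2⟩
  have hr0 : (0:ℝ) < r := by linarith
  have ha : (0:ℝ) < 1 - r := by linarith
  have ha2 : 1 - r ≤ 1/2 := by linarith
  set F : ℝ → ℝ := fun θ => r ^ (-q) * ‖1 - kz r θ‖ ^ p *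
      ‖1 + kz r θ‖ ^ (-(3*p-2*q)) with hFdef
  have hIeq : (∫ θ in (0:ℝ)..(2 * Real.pi),
        ‖deriv (fun z : ℂ => z / (1 + z) ^ 2)
            ((r : ℂ) * Complex.exp ((θ : ℂ) * Complex.I))‖ ^ p /
        ‖((r : ℂ) * Complex.exp ((θ : ℂ) * Complex.I)) /
            (1 + (r : ℂ) * Complex.exp ((θ : ℂ) * Complex.I)) ^ 2‖ ^ q)
      = ∫ θ in (0:ℝ)..(2 * Real.pi), F θ := by
    apply intervalIntegral.integral_congr
    intro θ _
    exact integrand_eq p q r θ hr0 hr2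
  -- continuity and integrability
  have hkzc : Continuous fun θ : ℝ => kz r θ := by
    unfold kz
    exact continuous_const.mul (Complex.continuous_exp.comp
      (Complex.continuous_ofReal.mul continuous_const))
  have hFc : Continuous F := by
    refine (continuous_const.mul ?_).mul ?_
    · exact (continuous_norm.comp (continuous_const.sub hkzc)).rpow_const
        fun θ => Or.inr hp
    · exact (continuous_norm.comp (continuous_const.add hkzc)).rpow_const
        fun θ => Or.inl (ne_of_gt (abs_one_add_kz_pos r θ hr0.le hr2))
  have hFi : ∀ x y : ℝ, IntervalIntegrable F volume x y :=
    fun x y => hFc.intervalIntegrable x y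
  have hF0 : ∀ θ, 0 ≤ F θ := fun θ =>
    mul_nonneg (mul_nonneg (Real.rpow_nonneg hr0.le _)
      (Real.rpow_nonneg (norm_nonneg _) _)) (Real.rpow_nonneg (norm_nonneg _) _)
  -- bounds on r ^ (-q)
  have h2pos : (0:ℝ) ≤ 2 := by norm_num
  have e1 : ((1:ℝ)/2) ^ |q| = 2^(-|q|) := by
    rw [one_div, Real.inv_rpow h2pos, ← Real.rpow_neg h2pos]
  have e4 : ((1:ℝ)/2) ^ (-|q|) = 2 ^ |q| := by
    rw [one_div, Real.inv_rpow h2pos, Real.rpow_neg h2pos, inv_inv]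
  have hrq_lo : (2:ℝ)^(-|q|) ≤ r^(-q) := by
    have habs2 : ((1:ℝ)/2) ^ |q| ≤ r ^ |q| :=
      Real.rpow_le_rpow (by norm_num) hr1 (abs_nonneg q)
    have e2 : r ^ |q| ≤ r ^ (-q) :=
      Real.rpow_le_rpow_of_exponent_ge hr0 hr2.le (neg_le_abs q)
    rw [← e1]; linarith
  have hrq_hi : r^(-q) ≤ (2:ℝ)^|q| := by
    have e2 : r ^ (-q) ≤ r ^ (-|q|) :=
      Real.rpow_le_rpow_of_exponent_ge hr0 hr2.le (neg_le_neg (le_abs_self q))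
    have e3 : r ^ (-|q|) ≤ ((1:ℝ)/2) ^ (-|q|) :=
      Real.rpow_le_rpow_of_nonpos (by norm_num) hr1 (neg_nonpos.mpr (abs_nonneg q))
    rw [← e4]; linarith
  -- global pointwise bound
  have hFg : ∀ θ, F θ ≤ 2^|q| * 2^p * (1-r)^(-(3*p-2*q)) := by
    intro θ
    have hBlow : ‖1 + kz r θ‖ ^ (-(3*p-2*q)) ≤ (1-r) ^ (-(3*p-2*q)) :=
      Real.rpow_le_rpow_of_nonpos ha (abs_one_add_kz_ge r θ hr0.le) (by linarith)
    have hAup : ‖1 - kz r θ‖ ^ p ≤ (2:ℝ) ^ p :=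
      Real.rpow_le_rpow (norm_nonneg _) (abs_one_sub_kz_le r θ hr0.le hr2.le) hp
    have := mul_le_mul (mul_le_mul hrq_hi hAup (Real.rpow_nonneg (norm_nonneg _) _)
      (Real.rpow_nonneg h2pos _)) hBlow (Real.rpow_nonneg (norm_nonneg _) _)
      (by positivity)
    exact this
  -- side pointwise bound
  have hside : ∀ θ, |θ - π| ≤ π → 1 - r ≤ |θ - π| →
      F θ ≤ 2^|q| * 2^p * (3:ℝ)^(3*p-2*q) * |θ - π| ^ (-(3*p-2*q)) := by
    intro θ h1 h2
    have hd : 0 < |θ - π| := lt_of_lt_of_le ha h2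
    have hB3 : ‖1 + kz r θ‖ ^ (-(3*p-2*q)) ≤ (|θ-π|/3) ^ (-(3*p-2*q)) :=
      Real.rpow_le_rpow_of_nonpos (by positivity) (abs_one_add_kz_ge_dist r θ hr1 h1)
        (by linarith)
    have hAup : ‖1 - kz r θ‖ ^ p ≤ (2:ℝ) ^ p :=
      Real.rpow_le_rpow (norm_nonneg _) (abs_one_sub_kz_le r θ hr0.le hr2.le) hp
    have hsplit : (|θ-π|/3 : ℝ) ^ (-(3*p-2*q)) = (3:ℝ)^(3*p-2*q) * |θ-π| ^ (-(3*p-2*q)) := by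
      rw [Real.div_rpow (abs_nonneg _) (by norm_num : (0:ℝ) ≤ 3), div_eq_mul_inv,
        ← Real.rpow_neg (by norm_num : (0:ℝ) ≤ 3), neg_neg]
      ring
    calc F θ ≤ 2^|q| * 2^p * ((|θ-π|/3) ^ (-(3*p-2*q))) :=
          mul_le_mul (mul_le_mul hrq_hi hAup (Real.rpow_nonneg (norm_nonneg _) _)
            (Real.rpow_nonneg h2pos _)) hB3 (Real.rpow_nonneg (norm_nonneg _) _)
            (by positivity)
      _ = 2^|q| * 2^p * (3:ℝ)^(3*p-2*q) * |θ - π| ^ (-(3*p-2*q)) := by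
          rw [hsplit]; ring
  -- the three pieces, upper bound
  have hy1 : (0:ℝ) ≤ π - (1-r) := by linarith
  have hy2 : π + (1-r) ≤ 2*π := by linarith
  have hI1 : ∫ θ in (0:ℝ)..(π-(1-r)), F θ ≤
      2^|q| * 2^p * (3:ℝ)^(3*p-2*q) * (((1-r)^(1-(3*p-2*q)) - π^(1-(3*p-2*q)))/(3*p-2*q-1)) := by
    have hg1i : IntervalIntegrable (fun θ : ℝ => (π - θ) ^ (-(3*p-2*q))) volume 0 (π - (1-r)) := by
      apply ContinuousOn.intervalIntegrable
      apply ContinuousOn.rpow_const (continuousOn_const.sub continuousOn_id)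
      intro θ hθ
      rw [Set.uIcc_of_le hy1] at hθ
      simp only [Pi.sub_apply, id_eq]
      exact Or.inl (ne_of_gt (by linarith [hθ.2]))
    have m1 : ∫ θ in (0:ℝ)..(π-(1-r)), F θ ≤
        ∫ θ in (0:ℝ)..(π-(1-r)), (2^|q| * 2^p * (3:ℝ)^(3*p-2*q)) * (π - θ)^(-(3*p-2*q)) := by
      apply intervalIntegral.integral_mono_on hy1 (hFi _ _) (hg1i.const_mul _)
      intro θ hθ
      have hθ1 := hθ.1
      have hθ2 := hθ.2
      have h1 : |θ - π| ≤ π := by rw [abs_le]; constructor <;> linarith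
      have h2 : 1 - r ≤ |θ - π| := by
        rw [abs_of_nonpos (by linarith)]; linarith
      have h3 := hside θ h1 h2
      rw [abs_of_nonpos (show θ - π ≤ 0 by linarith), neg_sub θ π] at h3
      exact h3
    rw [intervalIntegral.integral_const_mul] at m1
    rw [int_sub_rpow (3*p-2*q) π 0 (π-(1-r)) hs1 (by linarith) hy1] at m1
    rw [show π - (π - (1-r)) = 1-r by ring, sub_zero] at m1
    exact m1
  have hI3 : ∫ θ in (π+(1-r))..(2*π), F θ ≤
      2^|q| * 2^p * (3:ℝ)^(3*p-2*q) * (((1-r)^(1-(3*p-2*q)) - π^(1-(3*p-2*q)))/(3*p-2*q-1)) := by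
    have hg3i : IntervalIntegrable (fun θ : ℝ => (θ - π) ^ (-(3*p-2*q))) volume (π+(1-r)) (2*π) := by
      apply ContinuousOn.intervalIntegrable
      apply ContinuousOn.rpow_const (continuousOn_id.sub continuousOn_const)
      intro θ hθ
      rw [Set.uIcc_of_le hy2] at hθ
      simp only [Pi.sub_apply, id_eq]
      exact Or.inl (ne_of_gt (by linarith [hθ.1]))
    have m3 : ∫ θ in (π+(1-r))..(2*π), F θ ≤
        ∫ θ in (π+(1-r))..(2*π), (2^|q| * 2^p * (3:ℝ)^(3*p-2*q)) * (θ - π)^(-(3*p-2*q)) := by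
      apply intervalIntegral.integral_mono_on hy2 (hFi _ _) (hg3i.const_mul _)
      intro θ hθ
      have hθ1 := hθ.1
      have hθ2 := hθ.2
      have h1 : |θ - π| ≤ π := by rw [abs_le]; constructor <;> linarith
      have h2 : 1 - r ≤ |θ - π| := by
        rw [abs_of_nonneg (by linarith)]; linarith
      have h3 := hside θ h1 h2
      rw [abs_of_nonneg (show (0:ℝ) ≤ θ - π by linarith)] at h3
      exact h3
    rw [intervalIntegral.integral_const_mul] at m3
    rw [int_rpow_sub (3*p-2*q) π (π+(1-r)) (2*π) hs1 (by linarith) hy2] at m3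
    rw [show π + (1-r) - π = 1-r by ring, show 2*π - π = π by ring] at m3
    exact m3
  have hI2 : ∫ θ in (π-(1-r))..(π+(1-r)), F θ ≤
      (2*(1-r)) * (2^|q| * 2^p * (1-r)^(-(3*p-2*q))) := by
    have m2 := intervalIntegral.integral_mono_on (a := π-(1-r)) (b := π+(1-r))
      (by linarith) (hFi _ _) intervalIntegrable_const (fun θ _ => hFg θ)
    rw [intervalIntegral.integral_const, smul_eq_mul,
      show π + (1-r) - (π - (1-r)) = 2*(1-r) by ring] at m2
    exact m2
  have hsplitU : (∫ θ in (0:ℝ)..(π-(1-r)), F θ) + (∫ θ in (π-(1-r))..(π+(1-r)), F θ)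
      + (∫ θ in (π+(1-r))..(2*π), F θ) = ∫ θ in (0:ℝ)..(2*π), F θ := by
    rw [intervalIntegral.integral_add_adjacent_intervals (hFi _ _) (hFi _ _),
      intervalIntegral.integral_add_adjacent_intervals (hFi _ _) (hFi _ _)]
  -- exponent algebra
  have hx : (1-r) ^ (-(3*p-2*q-1)) = (1-r) * (1-r)^(-(3*p-2*q)) := by
    rw [show -(3*p-2*q-1) = 1 + -(3*p-2*q) by ring, Real.rpow_add ha, Real.rpow_one]
  have hy : (1-r) ^ (1-(3*p-2*q)) = (1-r) * (1-r)^(-(3*p-2*q)) := by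
    rw [show 1-(3*p-2*q) = 1 + -(3*p-2*q) by ring, Real.rpow_add ha, Real.rpow_one]
  -- upper bound
  have hπnn : (0:ℝ) ≤ π^(1-(3*p-2*q)) := Real.rpow_nonneg pi_pos.le _
  have hI1' : ∫ θ in (0:ℝ)..(π-(1-r)), F θ ≤
      2^|q| * 2^p * (3:ℝ)^(3*p-2*q) * (((1-r) * (1-r)^(-(3*p-2*q)))/(3*p-2*q-1)) := by
    refine le_trans hI1 ?_
    rw [← hy]
    exact mul_le_mul_of_nonneg_left ((div_le_div_iff_of_pos_right hpq).mpr (by linarith)) (by positivity)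
  have hI3' : ∫ θ in (π+(1-r))..(2*π), F θ ≤
      2^|q| * 2^p * (3:ℝ)^(3*p-2*q) * (((1-r) * (1-r)^(-(3*p-2*q)))/(3*p-2*q-1)) := by
    refine le_trans hI3 ?_
    rw [← hy]
    exact mul_le_mul_of_nonneg_left ((div_le_div_iff_of_pos_right hpq).mpr (by linarith)) (by positivity)
  have heq : 2^|q| * 2^p * (3:ℝ)^(3*p-2*q) * (((1-r) * (1-r)^(-(3*p-2*q)))/(3*p-2*q-1))
      + (2*(1-r)) * (2^|q| * 2^p * (1-r)^(-(3*p-2*q)))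
      + 2^|q| * 2^p * (3:ℝ)^(3*p-2*q) * (((1-r) * (1-r)^(-(3*p-2*q)))/(3*p-2*q-1))
      = 2^|q| * 2^p * (2 + 2*(3:ℝ)^(3*p-2*q)/(3*p-2*q-1)) * ((1-r) * (1-r)^(-(3*p-2*q))) := by
    have hne : (3*p-2*q-1) ≠ 0 := ne_of_gt hpq
    field_simp
    ring
  have hup : (∫ θ in (0:ℝ)..(2*π), F θ) ≤
      2^|q| * 2^p * (2 + 2*(3:ℝ)^(3*p-2*q)/(3*p-2*q-1)) * (1-r)^(-(3*p-2*q-1)) := by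
    rw [← hsplitU, hx]
    linarith [hI1', hI2, hI3', heq]
  -- lower bound
  have hlowpt : ∀ θ ∈ Set.Icc π (π+(1-r)),
      2^(-|q|) * (2:ℝ)^(-(3*p-2*q)/2) * (1-r)^(-(3*p-2*q)) ≤ F θ := by
    intro θ hθ
    obtain ⟨hθ1, hθ2⟩ := hθ
    have hA : (1:ℝ) ≤ ‖1 - kz r θ‖ :=
      abs_one_sub_kz_ge_one r θ hr0.le (by linarith) (by linarith)
    have hA1 : (1:ℝ) ≤ ‖1 - kz r θ‖ ^ p := by
      have := Real.rpow_le_rpow (by norm_num : (0:ℝ) ≤ 1) hA hp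
      rwa [Real.one_rpow] at this
    have habsθ : |θ - π| ≤ 1 - r := by
      rw [abs_of_nonneg (by linarith)]; linarith
    have hB2 := sq_abs_one_add_kz_le r θ hr0.le hr2.le habsθ
    have hBpos := abs_one_add_kz_pos r θ hr0.le hr2
    have e1' : ‖1+kz r θ‖ ^ (-(3*p-2*q))
        = (‖1+kz r θ‖^2) ^ (-(3*p-2*q)/2) := by
      rw [← Real.rpow_natCast (‖1+kz r θ‖) 2, ← Real.rpow_mul (norm_nonneg _)]
      congr 1
      push_cast; ring
    have hBe : (2*(1-r)^2 : ℝ) ^ (-(3*p-2*q)/2) ≤ ‖1+kz r θ‖ ^ (-(3*p-2*q)) := by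
      rw [e1']
      exact Real.rpow_le_rpow_of_nonpos (by positivity) hB2 (by linarith)
    have he2 : (2*(1-r)^2 : ℝ) ^ (-(3*p-2*q)/2)
        = 2^(-(3*p-2*q)/2) * (1-r)^(-(3*p-2*q)) := by
      rw [Real.mul_rpow h2pos (by positivity)]
      congr 1
      rw [← Real.rpow_natCast (1-r) 2, ← Real.rpow_mul ha.le]
      congr 1
      push_cast; ring
    calc 2^(-|q|) * (2:ℝ)^(-(3*p-2*q)/2) * (1-r)^(-(3*p-2*q))
        = 2^(-|q|) * 1 * ((2*(1-r)^2 : ℝ) ^ (-(3*p-2*q)/2)) := by rw [he2]; ring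
      _ ≤ r^(-q) * ‖1 - kz r θ‖^p * ‖1+kz r θ‖^(-(3*p-2*q)) :=
          mul_le_mul (mul_le_mul hrq_lo hA1 zero_le_one (Real.rpow_nonneg hr0.le _)) hBe
            (Real.rpow_nonneg (by positivity) _) (by positivity)
      _ = F θ := rfl
  have hm : (1-r) * (2^(-|q|) * (2:ℝ)^(-(3*p-2*q)/2) * (1-r)^(-(3*p-2*q)))
      ≤ ∫ θ in π..(π+(1-r)), F θ := by
    have m := intervalIntegral.integral_mono_on (a := π) (b := π+(1-r))
      (by linarith) intervalIntegrable_const (hFi _ _) hlowpt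
    rw [intervalIntegral.integral_const, smul_eq_mul,
      show π + (1-r) - π = 1-r by ring] at m
    exact m
  have hnn1 : 0 ≤ ∫ θ in (0:ℝ)..π, F θ :=
    intervalIntegral.integral_nonneg pi_pos.le (fun u _ => hF0 u)
  have hnn3 : 0 ≤ ∫ θ in (π+(1-r))..(2*π), F θ :=
    intervalIntegral.integral_nonneg (by linarith) (fun u _ => hF0 u)
  have hsplitL : (∫ θ in (0:ℝ)..π, F θ) + (∫ θ in π..(π+(1-r)), F θ)
      + (∫ θ in (π+(1-r))..(2*π), F θ) = ∫ θ in (0:ℝ)..(2*π), F θ := by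
    rw [intervalIntegral.integral_add_adjacent_intervals (hFi _ _) (hFi _ _),
      intervalIntegral.integral_add_adjacent_intervals (hFi _ _) (hFi _ _)]
  have hlo : 2^(-|q|) * (2:ℝ)^(-(3*p-2*q)/2) * (1-r)^(-(3*p-2*q-1))
      ≤ ∫ θ in (0:ℝ)..(2*π), F θ := by
    rw [hx, ← hsplitL]
    have hrr : 2^(-|q|) * (2:ℝ)^(-(3*p-2*q)/2) * ((1-r) * (1-r)^(-(3*p-2*q)))
        = (1-r) * (2^(-|q|) * (2:ℝ)^(-(3*p-2*q)/2) * (1-r)^(-(3*p-2*q))) := by ring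
    linarith [hm, hnn1, hnn3]
  constructor
  · rw [hIeq]
    exact hlo
  · rw [hIeq]
    exact hup
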